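/- Let 1≤i≤m, α∈T and x,y∈V(Γᵢ(α)). If d⁺_{Γᵢ(α)}(x)>d⁺_{Γᵢ(α)}(y), then (x,y)∈Γ_{1,3} and p^{(1,3)}_{(2,2),(3,1)}≠0. -/

import Mathlib

namespace Paper

/-- A digraph: a set of vertices together with a set of arcs (ordered pairs of
distinct vertices). -/
structure Digraph (V : Type*) where
  Adj : V → V → Prop
  loopless : ∀ v : V, ¬ Adj v v

variable {V V' : Type*}

namespace Digraph

/-- There is a directed walk of length `n` from `x` to `y`. -/
def HasPath (G : Digraph V) (x y : V) (n : ℕ) : Prop :=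
  ∃ f : ℕ → V, f 0 = x ∧ f n = y ∧ ∀ k < n, G.Adj (f k) (f (k + 1))

/-- The distance `∂(x,y)`: the length of a shortest directed path from `x` to `y`. -/
noncomputable def dist (G : Digraph V) (x y : V) : ℕ :=
  sInf {n | G.HasPath x y n}

/-- The two-way distance `∂̃(x,y) = (∂(x,y), ∂(y,x))`. -/
noncomputable def tdist (G : Digraph V) (x y : V) : ℕ × ℕ :=
  (G.dist x y, G.dist y x)

/-- The two-way distance set `∂̃(Γ)`. -/
def tdSet (G : Digraph V) : Set (ℕ × ℕ) :=
  {p | ∃ x y : V, G.tdist x y = p}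

def StronglyConnected (G : Digraph V) : Prop :=
  ∀ x y : V, ∃ n, G.HasPath x y n

/-- `P_{ĩ,j̃}(x,y)`: the set of `z` with `∂̃(x,z) = ĩ` and `∂̃(z,y) = j̃`. -/
def P (G : Digraph V) (i j : ℕ × ℕ) (x y : V) : Set V :=
  {z | G.tdist x z = i ∧ G.tdist z y = j}

open Classical in
/-- The intersection number `p^{h̃}_{ĩ,j̃}`, defined using an arbitrarily chosen
pair at two-way distance `h̃` (and `0` if there is no such pair). -/
noncomputable def p (G : Digraph V) (h i j : ℕ × ℕ) : ℕ :=
  if hh : ∃ xy : V × V, G.tdist xy.1 xy.2 = h then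
    Nat.card (G.P i j hh.choose.1 hh.choose.2)
  else 0

/-- A weakly distance-regular digraph: strongly connected, and
`|P_{ĩ,j̃}(x,y)|` depends only on `∂̃(x,y)`, `ĩ` and `j̃`. -/
def IsWDR (G : Digraph V) : Prop :=
  G.StronglyConnected ∧
    ∀ (i j : ℕ × ℕ) (x y : V), Nat.card (G.P i j x y) = G.p (G.tdist x y) i j

/-- Commutativity: `p^{h̃}_{ĩ,j̃} = p^{h̃}_{j̃,ĩ}` for all `h̃,ĩ,j̃ ∈ ∂̃(Γ)`. -/
def IsCommutative (G : Digraph V) : Prop :=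
  ∀ h i j : ℕ × ℕ, h ∈ G.tdSet → i ∈ G.tdSet → j ∈ G.tdSet → G.p h i j = G.p h j i

/-- `Γ` is an undirected graph, i.e. its arc set is symmetric. -/
def IsUndirected (G : Digraph V) : Prop :=
  ∀ x y : V, G.Adj x y → G.Adj y x

def IsSemicomplete (G : Digraph V) : Prop :=
  ∀ x y : V, x ≠ y → (G.Adj x y ∨ G.Adj y x)

/-- `Γ` is a complete (undirected) graph. -/
def IsCompleteDigraph (G : Digraph V) : Prop :=
  ∀ x y : V, x ≠ y → (G.Adj x y ∧ G.Adj y x)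

/-- The underlying graph of a digraph. -/
def underlying (G : Digraph V) : SimpleGraph V where
  Adj x y := G.Adj x y ∨ G.Adj y x
  symm := ⟨fun _ _ h => h.symm⟩
  loopless := ⟨fun x h => h.elim (G.loopless x) (G.loopless x)⟩

/-- The diameter: the maximum value of the distance function. -/
noncomputable def diameter (G : Digraph V) : ℕ :=
  sSup {n | ∃ x y : V, G.dist x y = n}

/-- The girth: the length of a shortest circuit. -/
noncomputable def girth (G : Digraph V) : ℕ :=
  sInf {n | 0 < n ∧ ∃ x : V, G.HasPath x x n}

/-- Number of out-neighbours `d⁺(x)`. -/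
noncomputable def outDeg (G : Digraph V) (x : V) : ℕ := Nat.card {y | G.Adj x y}

/-- Number of in-neighbours `d⁻(x)`. -/
noncomputable def inDeg (G : Digraph V) (x : V) : ℕ := Nat.card {y | G.Adj y x}

def IsIsomorphicTo (G : Digraph V) (G' : Digraph V') : Prop :=
  ∃ e : V ≃ V', ∀ x y : V, G.Adj x y ↔ G'.Adj (e x) (e y)

/-- The Cartesian product of two digraphs. -/
def box (G : Digraph V) (G' : Digraph V') : Digraph (V × V') where
  Adj x y := (x.1 = y.1 ∧ G'.Adj x.2 y.2) ∨ (G.Adj x.1 y.1 ∧ x.2 = y.2)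
  loopless := fun v h => h.elim (fun h' => G'.loopless v.2 h'.2) (fun h' => G.loopless v.1 h'.1)

/-- Two digraphs have the same intersection numbers. -/
def SameIntersectionNumbers (G : Digraph V) (G' : Digraph V') : Prop :=
  G.tdSet = G'.tdSet ∧
    ∀ h i j : ℕ × ℕ, h ∈ G.tdSet → i ∈ G.tdSet → j ∈ G.tdSet → G.p h i j = G'.p h i j

/-- Induced subdigraph on a set of vertices. -/
def induce (G : Digraph V) (s : Set V) : Digraph s where
  Adj x y := G.Adj x.1 y.1
  loopless := fun v h => G.loopless v.1 h

end Digraph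

/-- The Cartesian product of a family of digraphs. -/
def piBox {ι : Type*} {W : ι → Type*} (G : ∀ i, Digraph (W i)) : Digraph (∀ i, W i) where
  Adj x y := ∃ i, (G i).Adj (x i) (y i) ∧ ∀ j, j ≠ i → x j = y j
  loopless := by
    rintro v ⟨i, hi, -⟩
    exact (G i).loopless _ hi

/-- The Cayley digraph `Cay(A,S)` of an additive group (for `S ⊆ A ∖ {0}`). -/
def Cay (A : Type*) [AddGroup A] (S : Set A) : Digraph A where
  Adj x y := x ≠ y ∧ y - x ∈ S
  loopless := fun _ h => h.1 rfl

/-- The Cayley graph of an additive group with respect to a symmetric connection set. -/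
def cayleyGraph (A : Type*) [AddGroup A] (S : Set A) : SimpleGraph A where
  Adj x y := x ≠ y ∧ (y - x ∈ S ∨ x - y ∈ S)
  symm := ⟨fun _ _ h => ⟨h.1.symm, h.2.symm⟩⟩
  loopless := ⟨fun _ h => h.1 rfl⟩

/-- The Hamming graph `H(ι, S)`: vertices are tuples, adjacent iff they differ in
exactly one coordinate. -/
def hammingGraph (ι : Type*) (S : Type*) : SimpleGraph (ι → S) where
  Adj x y := ∃ i, x i ≠ y i ∧ ∀ j, j ≠ i → x j = y j
  symm := by
    constructor
    rintro x y ⟨i, h1, h2⟩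
    exact ⟨i, h1.symm, fun j hj => (h2 j hj).symm⟩
  loopless := by
    constructor
    rintro x ⟨i, h1, -⟩
    exact h1 rfl

/-- The folded `n`-cube: vertices are `(n-1)`-tuples over `ℤ₂`, adjacent iff they
differ in exactly one coordinate or in all `n-1` coordinates. -/
def foldedCube (n : ℕ) : SimpleGraph (Fin (n - 1) → ZMod 2) where
  Adj x y := (∃ i, x i ≠ y i ∧ ∀ j, j ≠ i → x j = y j) ∨ (x ≠ y ∧ ∀ j, x j ≠ y j)
  symm := by
    constructor
    rintro x y (⟨i, h1, h2⟩ | ⟨h1, h2⟩)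
    · exact Or.inl ⟨i, h1.symm, fun j hj => (h2 j hj).symm⟩
    · exact Or.inr ⟨h1.symm, fun j => (h2 j).symm⟩
  loopless := by
    constructor
    rintro x (⟨i, h1, -⟩ | ⟨h1, -⟩)
    · exact h1 rfl
    · exact h1 rfl

/-- The Cartesian product of a family of simple graphs. -/
def piBoxGraph {ι : Type*} {W : ι → Type*} (G : ∀ i, SimpleGraph (W i)) :
    SimpleGraph (∀ i, W i) where
  Adj x y := ∃ i, (G i).Adj (x i) (y i) ∧ ∀ j, j ≠ i → x j = y j
  symm := by
    constructor
    rintro x y ⟨i, h1, h2⟩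
    exact ⟨i, (G i).adj_symm h1, fun j hj => (h2 j hj).symm⟩
  loopless := by
    constructor
    rintro x ⟨i, h1, -⟩
    exact (G i).loopless.irrefl _ h1

/-- The Shrikhande graph `Cay(ℤ₄ × ℤ₄, {±(1,0), ±(0,1), ±(1,1)})`. -/
def shrikhande : SimpleGraph (ZMod 4 × ZMod 4) :=
  cayleyGraph (ZMod 4 × ZMod 4) {(1, 0), (-1, 0), (0, 1), (0, -1), (1, 1), (-1, -1)}

/-- The Doob graph `G(d₁, d₂)`: the Cartesian product of `d₁` copies of the
Shrikhande graph with the Hamming graph `H(d₂, 4)`. -/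
def doobGraph (d₁ d₂ : ℕ) :
    SimpleGraph ((Fin d₁ → ZMod 4 × ZMod 4) × (Fin d₂ → ZMod 4)) :=
  (piBoxGraph fun _ : Fin d₁ => shrikhande).boxProd (hammingGraph (Fin d₂) (ZMod 4))

/-- `c_i(x,y)`: the number of neighbours of `y` at distance `i - 1` from `x`. -/
noncomputable def cNum (G : SimpleGraph V) (i : ℕ) (x y : V) : ℕ :=
  Nat.card {z : V | G.Adj y z ∧ G.dist x z = i - 1}

/-- `a_i(x,y)`: the number of neighbours of `y` at distance `i` from `x`. -/
noncomputable def aNum (G : SimpleGraph V) (i : ℕ) (x y : V) : ℕ :=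
  Nat.card {z : V | G.Adj y z ∧ G.dist x z = i}

/-- `b_i(x,y)`: the number of neighbours of `y` at distance `i + 1` from `x`. -/
noncomputable def bNum (G : SimpleGraph V) (i : ℕ) (x y : V) : ℕ :=
  Nat.card {z : V | G.Adj y z ∧ G.dist x z = i + 1}

/-- A distance-regular graph. -/
def IsDRG (G : SimpleGraph V) : Prop :=
  G.Connected ∧
    ∀ (i : ℕ) (x y x' y' : V), G.dist x y = i → G.dist x' y' = i →
      cNum G i x y = cNum G i x' y' ∧ bNum G i x y = bNum G i x' y'

/-- A distance-transitive graph. -/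
def IsDistanceTransitive (G : SimpleGraph V) : Prop :=
  G.Connected ∧
    ∀ x y x' y' : V, G.dist x y = G.dist x' y' → ∃ σ : G ≃g G, σ x = x' ∧ σ y = y'

/-- The vertex set of `Γ_i(α)`: all tuples obtained from `α` by inserting an
arbitrary element of `S` in the `i`-th coordinate. -/
def lineSet {n : ℕ} {S : Type*} (i : Fin (n + 1)) (α : Fin n → S) : Set (Fin (n + 1) → S) :=
  Set.range fun b : S => i.insertNth b α

/-- The induced subdigraph `Γ_i(α)`. -/
def Digraph.line {n : ℕ} {S : Type*} (Γ : Digraph (Fin (n + 1) → S)) (i : Fin (n + 1))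
    (α : Fin n → S) : Digraph (lineSet i α) :=
  Γ.induce (lineSet i α)

/-- Pad a tuple of length `m` with the entry `o` to a tuple of length `d`. -/
def pad {S : Type*} (o : S) (d m : ℕ) (α : Fin m → S) : Fin d → S :=
  fun j => if h : j.1 < m then α ⟨j.1, h⟩ else o

/-- The digraph `Γ^{[m]}` on `S^m`: `(α,β)` is an arc iff the padded tuples form
an arc of `Γ`. -/
def Digraph.trunc {S : Type*} {d : ℕ} (Γ : Digraph (Fin d → S)) (o : S) (m : ℕ) :
    Digraph (Fin m → S) where
  Adj α β := Γ.Adj (pad o d m α) (pad o d m β)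
  loopless := fun _ h => Γ.loopless _ h

/-- The digraph `Γ^i` on `S`: `(a,b)` is an arc iff the tuples with `a` resp. `b`
in the `i`-th coordinate and `o` elsewhere form an arc of `Γ`. -/
def Digraph.coordDigraph {S : Type*} {d : ℕ} (Γ : Digraph (Fin d → S)) (o : S) (i : Fin d) :
    Digraph S where
  Adj a b := Γ.Adj (Function.update (fun _ => o) i a) (Function.update (fun _ => o) i b)
  loopless := fun _ h => Γ.loopless _ h

/-- The set `T = S^{m-1} × {(o,…,o)}` (as a subset of `S^{d-1}`, here `d = n+1`). -/
def Tset {n : ℕ} (S : Type*) (o : S) (m : ℕ) : Set (Fin n → S) :=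
  {α | ∀ j : Fin n, m - 1 ≤ j.1 → α j = o}

end Paper

namespace Paper

namespace Digraph

variable {V : Type*} (G : Digraph V)

/-- trivial path of length 0 -/
lemma hasPath_zero (x : V) : G.HasPath x x 0 :=
  ⟨fun _ => x, rfl, rfl, fun k hk => absurd hk (Nat.not_lt_zero k)⟩

lemma hasPath_one {x y : V} (h : G.Adj x y) : G.HasPath x y 1 := by
  refine ⟨fun k => if k = 0 then x else y, by simp, by simp, ?_⟩
  intro k hk
  interval_cases k
  simpa using h

lemma hasPath_zero_iff {x y : V} : G.HasPath x y 0 ↔ x = y := by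
  constructor
  · rintro ⟨f, h0, hn, -⟩; rw [← h0, hn]
  · rintro rfl; exact G.hasPath_zero x

lemma hasPath_concat {x y z : V} {m n : ℕ} (h1 : G.HasPath x y m) (h2 : G.HasPath y z n) :
    G.HasPath x z (m + n) := by
  obtain ⟨f, hf0, hfm, hf⟩ := h1
  obtain ⟨g, hg0, hgn, hg⟩ := h2
  refine ⟨fun k => if k < m then f k else g (k - m), ?_, ?_, ?_⟩
  · by_cases h : 0 < m
    · simpa [h] using hf0
    · have hm : m = 0 := by omega
      subst hm
      simp only [Nat.lt_irrefl, if_false, Nat.sub_zero, hg0]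
      rw [← hfm, hf0]
  · have : ¬ (m + n < m) := by omega
    simp only [this, if_false]
    rw [Nat.add_sub_cancel_left, hgn]
  · intro k hk
    by_cases h1' : k + 1 < m
    · have hk' : k < m := by omega
      simpa [h1', hk'] using hf k (by omega)
    · by_cases h2' : k < m
      · have hm : k + 1 = m := by omega
        have : ¬ (k + 1 < m) := by omega
        simp only [h2', if_true, this, if_false]
        have : g (k + 1 - m) = f (k+1) := by
          rw [hm, Nat.sub_self, hg0, ← hfm]
        rw [this]
        exact hf k (by omega)
      · have h3 : ¬ (k + 1 < m) := by omega
        simp only [h2', h3, if_false]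
        have h4 : k + 1 - m = (k - m) + 1 := by omega
        rw [h4]
        exact hg (k - m) (by omega)

lemma hasPath_tail {x y z : V} {n : ℕ} (hxy : G.Adj x y) (h : G.HasPath y z n) :
    G.HasPath x z (n + 1) := by
  have := G.hasPath_concat (G.hasPath_one hxy) h
  rwa [Nat.add_comm] at this

lemma dist_le {x y : V} {n : ℕ} (h : G.HasPath x y n) : G.dist x y ≤ n :=
  Nat.sInf_le h

@[simp] lemma dist_self (x : V) : G.dist x x = 0 :=
  Nat.le_zero.mp (G.dist_le (G.hasPath_zero x))

lemma hasPath_dist {x y : V} (h : ∃ n, G.HasPath x y n) : G.HasPath x y (G.dist x y) :=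
  Nat.sInf_mem h

lemma dist_eq_zero_iff {x y : V} (h : ∃ n, G.HasPath x y n) : G.dist x y = 0 ↔ x = y := by
  constructor
  · intro h0
    have := G.hasPath_dist h
    rw [h0] at this
    exact (G.hasPath_zero_iff).mp this
  · rintro rfl; exact G.dist_self x

lemma adj_of_hasPath_one {x y : V} (h : G.HasPath x y 1) : G.Adj x y := by
  obtain ⟨f, h0, h1, hs⟩ := h
  have := hs 0 Nat.zero_lt_one
  rwa [h0, h1] at this

lemma dist_eq_one_iff {x y : V} : G.dist x y = 1 ↔ G.Adj x y := by
  constructor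
  · intro h1
    have hne : {n | G.HasPath x y n}.Nonempty := by
      by_contra hc
      rw [Set.not_nonempty_iff_eq_empty] at hc
      have : G.dist x y = 0 := by rw [Digraph.dist, hc]; exact Nat.sInf_empty
      omega
    have := Nat.sInf_mem hne
    rw [show sInf {n | G.HasPath x y n} = G.dist x y from rfl, h1] at this
    exact G.adj_of_hasPath_one this
  · intro h
    have hle := G.dist_le (G.hasPath_one h)
    have hne : G.dist x y ≠ 0 := by
      intro h0
      have hx : x = y := (G.dist_eq_zero_iff ⟨1, G.hasPath_one h⟩).mp h0
      exact G.loopless x (hx ▸ h)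
    omega

lemma adj_iff_dist_one {x y : V} : G.Adj x y ↔ G.dist x y = 1 := (G.dist_eq_one_iff).symm

/-- triangle inequality, given strong connectivity -/
lemma dist_triangle (hsc : G.StronglyConnected) (x y z : V) :
    G.dist x z ≤ G.dist x y + G.dist y z := by
  have h1 := G.hasPath_dist (hsc x y)
  have h2 := G.hasPath_dist (hsc y z)
  exact G.dist_le (G.hasPath_concat h1 h2)

/-- decompose a shortest path: first step -/
lemma exists_adj_dist (hsc : G.StronglyConnected) {x y : V} {n : ℕ}
    (h : G.dist x y = n + 1) : ∃ z, G.Adj x z ∧ G.dist z y = n := by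
  have hp := G.hasPath_dist (hsc x y)
  rw [h] at hp
  obtain ⟨f, h0, hn, hs⟩ := hp
  refine ⟨f 1, by have := hs 0 (by omega); rwa [h0] at this, ?_⟩
  have hle : G.dist (f 1) y ≤ n := by
    refine G.dist_le ⟨fun k => f (k + 1), rfl, by rw [← hn], fun k hk => hs (k+1) (by omega)⟩
  have hge : n ≤ G.dist (f 1) y := by
    by_contra hc
    push_neg at hc
    have hadj : G.Adj x (f 1) := by have := hs 0 (by omega); rwa [h0] at this
    have := G.dist_le (G.hasPath_tail hadj (G.hasPath_dist (hsc (f 1) y)))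
    omega
  omega

lemma tdist_swap (x y : V) : G.tdist y x = ((G.tdist x y).2, (G.tdist x y).1) := rfl

@[simp] lemma tdist_self (x : V) : G.tdist x x = (0, 0) := by
  simp [Digraph.tdist]

lemma tdist_fst (x y : V) : (G.tdist x y).1 = G.dist x y := rfl
lemma tdist_snd (x y : V) : (G.tdist x y).2 = G.dist y x := rfl

end Digraph

end Paper

namespace Paper

namespace Digraph

variable {V : Type*} (G : Digraph V)

lemma P_empty_left {i j : ℕ × ℕ} (hi : i ∉ G.tdSet) (x y : V) : G.P i j x y = ∅ := by
  ext z
  simp only [Digraph.P, Set.mem_setOf_eq, Set.mem_empty_iff_false, iff_false, not_and]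
  intro hz
  exact absurd ⟨x, z, hz⟩ hi

lemma P_empty_right {i j : ℕ × ℕ} (hj : j ∉ G.tdSet) (x y : V) : G.P i j x y = ∅ := by
  ext z
  simp only [Digraph.P, Set.mem_setOf_eq, Set.mem_empty_iff_false, iff_false, not_and]
  intro _ hz
  exact absurd ⟨z, y, hz⟩ hj

/-- The key symmetry: `|P_{ĩ,j̃}(x,y)| = |P_{j̃,ĩ}(x,y)|` from commutativity. -/
lemma Pcard_comm (hwdr : G.IsWDR) (hcomm : G.IsCommutative) (i j : ℕ × ℕ) (x y : V) :
    Nat.card (G.P i j x y) = Nat.card (G.P j i x y) := by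
  by_cases hi : i ∈ G.tdSet
  · by_cases hj : j ∈ G.tdSet
    · rw [hwdr.2 i j x y, hwdr.2 j i x y,
        hcomm (G.tdist x y) i j ⟨x, y, rfl⟩ hi hj]
    · rw [G.P_empty_right hj, G.P_empty_left hj]
  · rw [G.P_empty_left hi, G.P_empty_right hi]

/-- witness transfer: if `P i j x y` is nonempty then so is `P j i x y`. -/
lemma P_swap_nonempty (hwdr : G.IsWDR) (hcomm : G.IsCommutative) {i j : ℕ × ℕ} {x y : V}
    [Finite V] (h : (G.P i j x y).Nonempty) : (G.P j i x y).Nonempty := by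
  have h1 : 0 < Nat.card (G.P i j x y) := by
    have : Nonempty (G.P i j x y) := h.to_subtype
    exact Nat.card_pos
  rw [G.Pcard_comm hwdr hcomm] at h1
  by_contra hc
  rw [Set.not_nonempty_iff_eq_empty] at hc
  rw [hc] at h1
  simp at h1

end Digraph

open Finset in
/-- card of a set as a filter card -/
lemma natCard_setOf_eq {V : Type*} [Fintype V] (p : V → Prop) [DecidablePred p] :
    Nat.card {c | p c} = (univ.filter p).card := by
  rw [Nat.card_eq_fintype_card]
  exact Fintype.card_subtype p

open Finset in
/-- Generic swapped-preimage counting lemma. -/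
lemma count_swap {V β : Type*} [Fintype V] [DecidableEq β] (g : V → β × β)
    (hfib : ∀ a b : β, (univ.filter (fun c => g c = (a, b))).card
      = (univ.filter (fun c => g c = (b, a))).card)
    (I : Set (β × β)) [DecidablePred (· ∈ I)] :
    (univ.filter (fun c => g c ∈ I)).card
      = (univ.filter (fun c => Prod.swap (g c) ∈ I)).card := by
  classical
  set T : Finset (β × β) := (univ.image g) ∪ (univ.image g).image Prod.swap with hT
  have hTswap : ∀ b ∈ T, Prod.swap b ∈ T := by
    intro b hb
    rw [hT, mem_union] at hb ⊢
    rcases hb with hb | hb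
    · right; exact mem_image_of_mem _ hb
    · left
      obtain ⟨a, ha, rfl⟩ := mem_image.mp hb
      simpa using ha
  have hmem1 : ∀ c ∈ univ.filter (fun c => g c ∈ I), g c ∈ T.filter (· ∈ I) := by
    intro c hc
    rw [mem_filter] at hc ⊢
    exact ⟨mem_union_left _ (mem_image_of_mem _ (mem_univ c)), hc.2⟩
  have hmem2 : ∀ c ∈ univ.filter (fun c => Prod.swap (g c) ∈ I),
      g c ∈ T.filter (fun b => Prod.swap b ∈ I) := by
    intro c hc
    rw [mem_filter] at hc ⊢
    exact ⟨mem_union_left _ (mem_image_of_mem _ (mem_univ c)), hc.2⟩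
  rw [card_eq_sum_card_fiberwise hmem1, card_eq_sum_card_fiberwise hmem2]
  have hfix1 : ∀ b ∈ T.filter (· ∈ I),
      (filter (fun a => g a = b) (filter (fun c => g c ∈ I) univ)).card
        = (univ.filter (fun c => g c = b)).card := by
    intro b hb
    rw [mem_filter] at hb
    congr 1
    ext c
    simp only [mem_filter, mem_univ, true_and]
    constructor
    · exact fun h => h.2
    · intro h; exact ⟨h ▸ hb.2, h⟩
  have hfix2 : ∀ b ∈ T.filter (fun b => Prod.swap b ∈ I),
      (filter (fun a => g a = b) (filter (fun c => Prod.swap (g c) ∈ I) univ)).card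
        = (univ.filter (fun c => g c = b)).card := by
    intro b hb
    rw [mem_filter] at hb
    congr 1
    ext c
    simp only [mem_filter, mem_univ, true_and]
    constructor
    · exact fun h => h.2
    · intro h; exact ⟨h ▸ hb.2, h⟩
  rw [Finset.sum_congr rfl hfix1, Finset.sum_congr rfl hfix2]
  refine (Finset.sum_nbij (fun b => Prod.swap b) ?_ ?_ ?_ ?_).symm
  · intro b hb
    rw [mem_filter] at hb ⊢
    refine ⟨hTswap b hb.1, ?_⟩
    simpa using hb.2
  · intro a _ b _ hab
    exact Prod.swap_injective hab
  · intro b hb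
    simp only [coe_filter, Set.mem_setOf_eq] at hb ⊢
    exact ⟨Prod.swap b, ⟨hTswap b hb.1, by simpa using hb.2⟩, by simp⟩
  · rintro ⟨b1, b2⟩ _
    have : (fun (b : β × β) => b.swap) (b1, b2) = (b2, b1) := rfl
    rw [Prod.swap_prod_mk]
    exact hfib b1 b2

end Paper

namespace Paper

section LineLemmas

variable {S : Type*} {n : ℕ} (Γ : Digraph (Fin (n + 1) → S)) (o : S) (m : ℕ)
  (i : Fin (n + 1)) (α : Fin n → S)

lemma insertNth_high (hi : i.1 < m) (hα : α ∈ Tset S o m) (b : S) {j : Fin (n+1)} (hj : ¬ j.1 < m) :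
    (i.insertNth b α : Fin (n+1) → S) j = o := by
  have hne : j ≠ i := by
    intro h
    rw [h] at hj
    exact hj hi
  obtain ⟨j', hj'⟩ := Fin.exists_succAbove_eq hne
  rw [← hj', Fin.insertNth_apply_succAbove]
  apply hα
  -- m - 1 ≤ j'.1
  have hval : (i.succAbove j').1 = j'.1 ∨ (i.succAbove j').1 = j'.1 + 1 := by
    rw [Fin.succAbove]
    split <;> simp
  have : (i.succAbove j').1 = j.1 := by rw [hj']
  omega

lemma pad_insertNth (hmd : m ≤ n + 1) (hi : i.1 < m) (hα : α ∈ Tset S o m) (b : S) :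
    pad o (n+1) m (fun k : Fin m => (i.insertNth b α : Fin (n+1) → S) (Fin.castLE hmd k)) = i.insertNth b α := by
  funext j
  rw [pad]
  split
  · rename_i h
    have hc : Fin.castLE hmd ⟨j.1, h⟩ = j := Fin.ext (by simp)
    rw [hc]
  · rename_i h
    exact (insertNth_high o m i α hi hα b h).symm

lemma line_sigma_adj (hmd : m ≤ n + 1) (hi : i.1 < m)
    (hham : (Γ.trunc o m).underlying = hammingGraph (Fin m) S)
    (hα : α ∈ Tset S o m) {u v : Fin (n+1) → S} (hu : u ∈ lineSet i α)
    (hv : v ∈ lineSet i α) (huv : u ≠ v) : Γ.underlying.Adj u v := by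
  obtain ⟨b, rfl⟩ := hu
  obtain ⟨c, rfl⟩ := hv
  have hbc : b ≠ c := by
    intro h; exact huv (by rw [h])
  set βu : Fin m → S := fun k => (i.insertNth b α : Fin (n+1) → S) (Fin.castLE hmd k) with hβu
  set βv : Fin m → S := fun k => (i.insertNth c α : Fin (n+1) → S) (Fin.castLE hmd k) with hβv
  have hcast : Fin.castLE hmd ⟨i.1, hi⟩ = i := by ext; simp
  have hadj : (hammingGraph (Fin m) S).Adj βu βv := by
    refine ⟨⟨i.1, hi⟩, ?_, ?_⟩
    · rw [hβu, hβv]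
      simpa [hcast] using hbc
    · intro k hk
      rw [hβu, hβv]
      have hne : Fin.castLE hmd k ≠ i := by
        intro h
        apply hk
        ext
        have : (Fin.castLE hmd k).1 = i.1 := by rw [h]
        simpa using this
      obtain ⟨j', hj'⟩ := Fin.exists_succAbove_eq hne
      simp only [← hj', Fin.insertNth_apply_succAbove]
  rw [← hham] at hadj
  rcases hadj with h | h
  · have h' : Γ.Adj (pad o (n+1) m βu) (pad o (n+1) m βv) := h
    rw [hβu, hβv, pad_insertNth o m i α hmd hi hα, pad_insertNth o m i α hmd hi hα] at h'
    exact Or.inl h'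
  · have h' : Γ.Adj (pad o (n+1) m βv) (pad o (n+1) m βu) := h
    rw [hβu, hβv, pad_insertNth o m i α hmd hi hα, pad_insertNth o m i α hmd hi hα] at h'
    exact Or.inr h'

lemma line_natCard [Finite S] : Nat.card (lineSet i α) = Nat.card S := by
  have hinj : Function.Injective (fun b : S => (i.insertNth b α : Fin (n+1) → S)) := by
    intro a b hab
    have := congrFun hab i
    simpa using this
  exact (Nat.card_congr (Equiv.ofInjective _ hinj)).symm

end LineLemmas

end Paper

namespace Paper

set_option linter.unusedSectionVars false

section SigmaLemmas

variable {V : Type*} [Finite V] (Γ : Digraph V)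

lemma underlying_adj_iff (u v : V) : Γ.underlying.Adj u v ↔ Γ.Adj u v ∨ Γ.Adj v u := Iff.rfl

lemma adj_underlying {u v : V} (h : Γ.Adj u v) : Γ.underlying.Adj u v := Or.inl h

lemma sigma_dist_two {u v w : V} (huv : u ≠ v) (hnadj : ¬ Γ.underlying.Adj u v)
    (h1 : Γ.underlying.Adj u w) (h2 : Γ.underlying.Adj w v) : Γ.underlying.dist u v = 2 := by
  have hle : Γ.underlying.dist u v ≤ 2 := by
    have := SimpleGraph.dist_le (SimpleGraph.Walk.cons h1 (SimpleGraph.Walk.cons h2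
      SimpleGraph.Walk.nil))
    simpa using this
  have h0 : Γ.underlying.dist u v ≠ 0 := by
    intro hz
    rcases SimpleGraph.dist_eq_zero_iff_eq_or_not_reachable.mp hz with h | h
    · exact huv h
    · exact h ((h1.reachable).trans h2.reachable)
  have h1' : Γ.underlying.dist u v ≠ 1 := by
    intro ho
    exact hnadj (SimpleGraph.dist_eq_one_iff_adj.mp ho)
  omega

/-- the common-neighbour set -/
def commSet (u v : V) : Set V := {z | Γ.underlying.Adj u z ∧ Γ.underlying.Adj v z}

lemma commSet_eq_aNum_set (u v : V) :
    {z | Γ.underlying.Adj v z ∧ Γ.underlying.dist u z = 1} = commSet Γ u v := by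
  ext z
  simp only [Set.mem_setOf_eq, commSet, SimpleGraph.dist_eq_one_iff_adj]
  tauto

/-- triangle-freeness when `a₁ = 0`, i.e. `q = 2`. -/
lemma tri_free (q : ℕ) (hq2 : q = 2)
    (ha1 : ∀ x y, Γ.underlying.dist x y = 1 → aNum Γ.underlying 1 x y = q - 2)
    {a b c : V} (hab : Γ.underlying.Adj a b) (hac : Γ.underlying.Adj a c)
    (hbc : Γ.underlying.Adj b c) : False := by
  have hd : Γ.underlying.dist a b = 1 := SimpleGraph.dist_eq_one_iff_adj.mpr hab
  have h0 := ha1 a b hd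
  rw [aNum, hq2, show (2:ℕ) - 2 = 0 from rfl] at h0
  have hc : c ∈ {z | Γ.underlying.Adj b z ∧ Γ.underlying.dist a z = 1} :=
    ⟨hbc, SimpleGraph.dist_eq_one_iff_adj.mpr hac⟩
  have hne : Nonempty {z | Γ.underlying.Adj b z ∧ Γ.underlying.dist a z = 1} :=
    ⟨⟨c, hc⟩⟩
  have := @Nat.card_pos _ hne _
  omega

/-- comm set exactly `{a, b}` for `Σ`-distance-2 pairs (from `c₂ = 2`). -/
lemma commSet_pair (q : ℕ)
    (hc2 : ∀ x y, Γ.underlying.dist x y = 2 → cNum Γ.underlying 2 x y = 2)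
    {u v : V} (hd : Γ.underlying.dist u v = 2) :
    ∃ a b, a ≠ b ∧ commSet Γ u v = {a, b} := by
  have h0 := hc2 u v hd
  rw [cNum] at h0
  rw [show (2:ℕ) - 1 = 1 from rfl] at h0
  rw [show ({z | Γ.underlying.Adj v z ∧ Γ.underlying.dist u z = 1})
    = commSet Γ u v from commSet_eq_aNum_set Γ u v] at h0
  rw [Nat.card_coe_set_eq] at h0
  exact Set.ncard_eq_two.mp h0

end SigmaLemmas

end Paper

namespace Paper

section MainLemmas
open Finset

variable {S : Type*} [Finite S] {n : ℕ} (Γ : Digraph (Fin (n + 1) → S))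

/-- outDeg on a line as a plain vertex count -/
lemma outDeg_line_eq (i : Fin (n+1)) (α : Fin n → S) (x : Fin (n+1) → S)
    (hx : x ∈ lineSet i α) :
    (Γ.line i α).outDeg ⟨x, hx⟩ = Nat.card {c : Fin (n+1) → S | c ∈ lineSet i α ∧ Γ.Adj x c} := by
  refine Nat.card_congr ⟨?_, ?_, ?_, ?_⟩
  · rintro ⟨⟨c, hc⟩, h⟩
    exact ⟨c, hc, h⟩
  · rintro ⟨c, hc, h⟩
    exact ⟨⟨c, hc⟩, h⟩
  · rintro ⟨⟨c, hc⟩, h⟩; rfl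
  · rintro ⟨c, hc, h⟩; rfl

/-- `Γ.Adj u c ↔ (tdist u c).1 = 1` -/
lemma adj_iff_tdist_fst (u c : Fin (n+1) → S) : Γ.Adj u c ↔ (Γ.tdist u c).1 = 1 :=
  Γ.adj_iff_dist_one

lemma adj_iff_tdist_snd (u c : Fin (n+1) → S) : Γ.Adj c u ↔ (Γ.tdist u c).2 = 1 :=
  Γ.adj_iff_dist_one

lemma sigma_adj_iff_tdist (u c : Fin (n+1) → S) :
    Γ.underlying.Adj u c ↔ ((Γ.tdist u c).1 = 1 ∨ (Γ.tdist u c).2 = 1) := by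
  rw [underlying_adj_iff, adj_iff_tdist_fst, adj_iff_tdist_snd]

/-- THE symmetric count: `|{c : u → c ~ v}| = |{c : u ~ c → v}|`. -/
lemma count_out_eq_count_in (hwdr : Γ.IsWDR) (hcomm : Γ.IsCommutative)
    (u v : Fin (n+1) → S) :
    Nat.card {c | Γ.Adj u c ∧ Γ.underlying.Adj c v}
      = Nat.card {c | Γ.underlying.Adj u c ∧ Γ.Adj c v} := by
  classical
  have : Fintype (Fin (n+1) → S) := Fintype.ofFinite _
  set g : (Fin (n+1) → S) → (ℕ × ℕ) × (ℕ × ℕ) := fun c => (Γ.tdist u c, Γ.tdist c v) with hg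
  set I : Set ((ℕ × ℕ) × (ℕ × ℕ)) := {p | p.1.1 = 1 ∧ (p.2.1 = 1 ∨ p.2.2 = 1)} with hI
  have hfib : ∀ a b : ℕ × ℕ, (univ.filter (fun c => g c = (a, b))).card
      = (univ.filter (fun c => g c = (b, a))).card := by
    intro a b
    have e1 : (univ.filter (fun c => g c = (a, b))).card = Nat.card (Γ.P a b u v) := by
      rw [Digraph.P, natCard_setOf_eq]
      congr 1
      ext c
      simp only [mem_filter, mem_univ, true_and, hg, Prod.mk.injEq, Set.mem_setOf_eq]
    have e2 : (univ.filter (fun c => g c = (b, a))).card = Nat.card (Γ.P b a u v) := by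
      rw [Digraph.P, natCard_setOf_eq]
      congr 1
      ext c
      simp only [mem_filter, mem_univ, true_and, hg, Prod.mk.injEq, Set.mem_setOf_eq]
    rw [e1, e2, Γ.Pcard_comm hwdr hcomm]
  have h1 : {c | Γ.Adj u c ∧ Γ.underlying.Adj c v} = {c | g c ∈ I} := by
    ext c
    simp only [Set.mem_setOf_eq, hI, hg]
    rw [adj_iff_tdist_fst, sigma_adj_iff_tdist]
  have h2 : {c | Γ.underlying.Adj u c ∧ Γ.Adj c v} = {c | Prod.swap (g c) ∈ I} := by
    ext c
    simp only [Set.mem_setOf_eq, hI, hg, Prod.swap]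
    rw [adj_iff_tdist_fst, sigma_adj_iff_tdist]
    tauto
  rw [h1, h2, natCard_setOf_eq, natCard_setOf_eq]
  exact count_swap g hfib I

end MainLemmas

end Paper

namespace Paper

set_option linter.unusedSectionVars false

section LineDegree

open Finset
open scoped Classical

variable {S : Type*} [Finite S] {n : ℕ} (Γ : Digraph (Fin (n + 1) → S))
  (o : S) (m : ℕ) (i : Fin (n + 1)) (α : Fin n → S)

/-- For distinct points on a line, the common neighbours are exactly the rest of the line. -/
lemma comm_eq_line (q : ℕ) (hq : q = Nat.card S)
    (ha1 : ∀ x y, Γ.underlying.dist x y = 1 → aNum Γ.underlying 1 x y = q - 2)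
    (hmd : m ≤ n + 1) (hi : i.1 < m)
    (hham : (Γ.trunc o m).underlying = hammingGraph (Fin m) S)
    (hα : α ∈ Tset S o m)
    {u v : Fin (n+1) → S} (hu : u ∈ lineSet i α) (hv : v ∈ lineSet i α) (huv : u ≠ v) :
    commSet Γ u v = lineSet i α \ {u, v} := by
  have hadj : Γ.underlying.Adj u v := line_sigma_adj Γ o m i α hmd hi hham hα hu hv huv
  have hsub : lineSet i α \ {u, v} ⊆ commSet Γ u v := by
    rintro z ⟨hzL, hz⟩
    simp only [Set.mem_insert_iff, Set.mem_singleton_iff, not_or] at hz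
    exact ⟨(line_sigma_adj Γ o m i α hmd hi hham hα hzL hu hz.1).symm,
      (line_sigma_adj Γ o m i α hmd hi hham hα hzL hv hz.2).symm⟩
  have hL : (lineSet i α).ncard = q := by
    rw [← Nat.card_coe_set_eq, line_natCard, hq]
  have hDcard : (lineSet i α \ {u, v}).ncard = q - 2 := by
    rw [Set.ncard_diff (by rintro z (rfl | rfl); exacts [hu, hv]), hL, Set.ncard_pair huv]
  have hCcard : (commSet Γ u v).ncard = q - 2 := by
    have h0 := ha1 u v (SimpleGraph.dist_eq_one_iff_adj.mpr hadj)
    rw [aNum, commSet_eq_aNum_set, Nat.card_coe_set_eq] at h0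
    exact h0
  exact (Set.eq_of_subset_of_ncard_le hsub (by rw [hDcard, hCcard])).symm

/-- out-degree within the line, decomposed -/
lemma line_out_decomp (q : ℕ) (hq : q = Nat.card S)
    (ha1 : ∀ x y, Γ.underlying.dist x y = 1 → aNum Γ.underlying 1 x y = q - 2)
    (hmd : m ≤ n + 1) (hi : i.1 < m)
    (hham : (Γ.trunc o m).underlying = hammingGraph (Fin m) S)
    (hα : α ∈ Tset S o m)
    {u v : Fin (n+1) → S} (hu : u ∈ lineSet i α) (hv : v ∈ lineSet i α) (huv : u ≠ v) :
    Nat.card {c | c ∈ lineSet i α ∧ Γ.Adj u c}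
      = Nat.card {c | Γ.Adj u c ∧ Γ.underlying.Adj c v} + (if Γ.Adj u v then 1 else 0) := by
  have hcomm_eq := comm_eq_line Γ o m i α q hq ha1 hmd hi hham hα hu hv huv
  have hBv : v ∉ {c | Γ.Adj u c ∧ Γ.underlying.Adj c v} := by
    rintro ⟨-, hvv⟩
    exact Γ.underlying.loopless.irrefl v hvv
  have hkey : ∀ c, c ≠ v → (c ∈ lineSet i α ∧ Γ.Adj u c ↔ Γ.Adj u c ∧ Γ.underlying.Adj c v) := by
    intro c hcv
    constructor
    · rintro ⟨hcL, hadj⟩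
      refine ⟨hadj, ?_⟩
      have hcu : c ≠ u := fun h => Γ.loopless u (h ▸ hadj)
      have : c ∈ commSet Γ u v := by
        rw [hcomm_eq]
        exact ⟨hcL, by simp [hcu, hcv]⟩
      exact this.2.symm
    · rintro ⟨hadj, hcv'⟩
      have : c ∈ commSet Γ u v := ⟨Or.inl hadj, hcv'.symm⟩
      rw [hcomm_eq] at this
      exact ⟨this.1, hadj⟩
  by_cases hA : Γ.Adj u v
  · have hset : {c | c ∈ lineSet i α ∧ Γ.Adj u c}
        = insert v {c | Γ.Adj u c ∧ Γ.underlying.Adj c v} := by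
      ext c
      by_cases hcv : c = v
      · subst hcv
        simp only [Set.mem_setOf_eq, Set.mem_insert_iff, true_or, iff_true]
        exact ⟨hv, hA⟩
      · simp only [Set.mem_setOf_eq, Set.mem_insert_iff, hcv, false_or]
        exact hkey c hcv
    rw [hset, if_pos hA, Nat.card_coe_set_eq, Nat.card_coe_set_eq,
      Set.ncard_insert_of_notMem hBv]
  · have hset : {c | c ∈ lineSet i α ∧ Γ.Adj u c}
        = {c | Γ.Adj u c ∧ Γ.underlying.Adj c v} := by
      ext c
      by_cases hcv : c = v
      · subst hcv
        simp only [Set.mem_setOf_eq]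
        constructor
        · rintro ⟨-, h⟩; exact absurd h hA
        · rintro ⟨h, -⟩; exact absurd h hA
      · exact hkey c hcv
    rw [hset, if_neg hA]
    simp

/-- in-degree within the line, decomposed -/
lemma line_in_decomp (q : ℕ) (hq : q = Nat.card S)
    (ha1 : ∀ x y, Γ.underlying.dist x y = 1 → aNum Γ.underlying 1 x y = q - 2)
    (hmd : m ≤ n + 1) (hi : i.1 < m)
    (hham : (Γ.trunc o m).underlying = hammingGraph (Fin m) S)
    (hα : α ∈ Tset S o m)
    {u v : Fin (n+1) → S} (hu : u ∈ lineSet i α) (hv : v ∈ lineSet i α) (huv : u ≠ v) :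
    Nat.card {c | c ∈ lineSet i α ∧ Γ.Adj c v}
      = Nat.card {c | Γ.underlying.Adj u c ∧ Γ.Adj c v} + (if Γ.Adj u v then 1 else 0) := by
  have hcomm_eq := comm_eq_line Γ o m i α q hq ha1 hmd hi hham hα hu hv huv
  have hBu : u ∉ {c | Γ.underlying.Adj u c ∧ Γ.Adj c v} := by
    rintro ⟨huu, -⟩
    exact Γ.underlying.loopless.irrefl u huu
  have hkey : ∀ c, c ≠ u → (c ∈ lineSet i α ∧ Γ.Adj c v ↔ Γ.underlying.Adj u c ∧ Γ.Adj c v) := by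
    intro c hcu
    constructor
    · rintro ⟨hcL, hadj⟩
      have hcv : c ≠ v := fun h => Γ.loopless v (h ▸ hadj)
      have : c ∈ commSet Γ u v := by
        rw [hcomm_eq]
        exact ⟨hcL, by simp [hcu, hcv]⟩
      exact ⟨this.1, hadj⟩
    · rintro ⟨hcu', hadj⟩
      have : c ∈ commSet Γ u v := ⟨hcu', Or.inr hadj⟩
      rw [hcomm_eq] at this
      exact ⟨this.1, hadj⟩
  by_cases hA : Γ.Adj u v
  · have hset : {c | c ∈ lineSet i α ∧ Γ.Adj c v}
        = insert u {c | Γ.underlying.Adj u c ∧ Γ.Adj c v} := by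
      ext c
      by_cases hcu : c = u
      · subst hcu
        simp only [Set.mem_setOf_eq, Set.mem_insert_iff, true_or, iff_true]
        exact ⟨hu, hA⟩
      · simp only [Set.mem_setOf_eq, Set.mem_insert_iff, hcu, false_or]
        exact hkey c hcu
    rw [hset, if_pos hA, Nat.card_coe_set_eq, Nat.card_coe_set_eq,
      Set.ncard_insert_of_notMem hBu]
  · have hset : {c | c ∈ lineSet i α ∧ Γ.Adj c v}
        = {c | Γ.underlying.Adj u c ∧ Γ.Adj c v} := by
      ext c
      by_cases hcu : c = u
      · subst hcu
        simp only [Set.mem_setOf_eq]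
        constructor
        · rintro ⟨-, h⟩; exact absurd h hA
        · rintro ⟨h, -⟩
          exact absurd h (Γ.underlying.loopless.irrefl _)
      · exact hkey c hcu
    rw [hset, if_neg hA]
    simp

end LineDegree

end Paper

namespace Paper

section Q3

open scoped Classical

variable {S : Type*} [Finite S] {n : ℕ} (Γ : Digraph (Fin (n + 1) → S))
  (o : S) (m : ℕ) (i : Fin (n + 1)) (α : Fin n → S)

/-- full line out-degree = in-degree identity -/
lemma line_out_eq_in (hwdr : Γ.IsWDR) (hcomm : Γ.IsCommutative)
    (q : ℕ) (hq : q = Nat.card S)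
    (ha1 : ∀ x y, Γ.underlying.dist x y = 1 → aNum Γ.underlying 1 x y = q - 2)
    (hmd : m ≤ n + 1) (hi : i.1 < m)
    (hham : (Γ.trunc o m).underlying = hammingGraph (Fin m) S)
    (hα : α ∈ Tset S o m)
    {u v : Fin (n+1) → S} (hu : u ∈ lineSet i α) (hv : v ∈ lineSet i α) (huv : u ≠ v) :
    Nat.card {c | c ∈ lineSet i α ∧ Γ.Adj u c}
      = Nat.card {c | c ∈ lineSet i α ∧ Γ.Adj c v} := by
  rw [line_out_decomp Γ o m i α q hq ha1 hmd hi hham hα hu hv huv,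
    line_in_decomp Γ o m i α q hq ha1 hmd hi hham hα hu hv huv,
    count_out_eq_count_in Γ hwdr hcomm u v]

/-- when `q ≥ 3`, the out-degrees on a line are constant, contradicting `hdeg` -/
lemma q3_false (hwdr : Γ.IsWDR) (hcomm : Γ.IsCommutative)
    (q : ℕ) (hq : q = Nat.card S)
    (ha1 : ∀ x y, Γ.underlying.dist x y = 1 → aNum Γ.underlying 1 x y = q - 2)
    (hmd : m ≤ n + 1) (hi : i.1 < m)
    (hham : (Γ.trunc o m).underlying = hammingGraph (Fin m) S)
    (hα : α ∈ Tset S o m)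
    {x y : Fin (n+1) → S} (hx : x ∈ lineSet i α) (hy : y ∈ lineSet i α)
    (hq3 : 3 ≤ q)
    (hOC : Nat.card {c | c ∈ lineSet i α ∧ Γ.Adj y c}
      < Nat.card {c | c ∈ lineSet i α ∧ Γ.Adj x c}) : False := by
  have hxy : x ≠ y := by
    rintro rfl
    exact Nat.lt_irrefl _ hOC
  have hL : (lineSet i α).ncard = q := by
    rw [← Nat.card_coe_set_eq, line_natCard, hq]
  have hDcard : (lineSet i α \ {x, y}).ncard = q - 2 := by
    rw [Set.ncard_diff (by rintro z (rfl | rfl); exacts [hx, hy]), hL, Set.ncard_pair hxy]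
  have hDne : (lineSet i α \ {x, y}).Nonempty := by
    rw [← Set.ncard_pos (Set.toFinite _), hDcard]
    omega
  obtain ⟨w, hwL, hwne⟩ := hDne
  simp only [Set.mem_insert_iff, Set.mem_singleton_iff, not_or] at hwne
  have h1 := line_out_eq_in Γ o m i α hwdr hcomm q hq ha1 hmd hi hham hα hx hwL
    (fun h => hwne.1 h.symm)
  have h2 := line_out_eq_in Γ o m i α hwdr hcomm q hq ha1 hmd hi hham hα hy hwL
    (fun h => hwne.2 h.symm)
  rw [h1, h2] at hOC
  exact Nat.lt_irrefl _ hOC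

end Q3

end Paper

namespace Paper

section Q2Step1

open scoped Classical

variable {V : Type*} [Finite V] (Γ : Digraph V)

/-- No `(1,2)`-style 2-paths back between `Σ`-adjacent vertices in a triangle-free graph;
more precisely any digraph 2-path gives a common neighbour. -/
lemma no_two_path (htf : ∀ {a b c : V}, Γ.underlying.Adj a b → Γ.underlying.Adj a c →
      Γ.underlying.Adj b c → False)
    (hsc : Γ.StronglyConnected) {u v : V} (hadj : Γ.underlying.Adj u v) :
    Γ.dist u v ≠ 2 := by
  intro h2
  obtain ⟨c, hc1, hc2⟩ := Γ.exists_adj_dist hsc (by rw [h2] : Γ.dist u v = 1 + 1)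
  have hc2' : Γ.Adj c v := Γ.dist_eq_one_iff.mp hc2
  exact htf hadj (adj_underlying Γ hc1) ((adj_underlying Γ hc2').symm)

/-- STEP 1 for the `t ≥ 4` exclusion: in a `(1,t)-(1,t)` 2-path `u → p → v`,
the common neighbours of `u,v` are exactly the `(1,t)`-midpoints. -/
lemma step1 (hwdr : Γ.IsWDR) (hcomm : Γ.IsCommutative)
    (htf : ∀ {a b c : V}, Γ.underlying.Adj a b → Γ.underlying.Adj a c →
      Γ.underlying.Adj b c → False)
    (hc2 : ∀ x y, Γ.underlying.dist x y = 2 → cNum Γ.underlying 2 x y = 2)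
    (t : ℕ) (ht4 : 4 ≤ t) {u p v : V}
    (h1 : Γ.tdist u p = (1, t)) (h2 : Γ.tdist p v = (1, t)) :
    commSet Γ u v = {c | Γ.tdist u c = (1, t) ∧ Γ.tdist c v = (1, t)}
      ∧ Γ.underlying.dist u v = 2 := by
  have hsc := hwdr.1
  have hup : Γ.Adj u p := Γ.dist_eq_one_iff.mp (congrArg Prod.fst h1)
  have hpv : Γ.Adj p v := Γ.dist_eq_one_iff.mp (congrArg Prod.fst h2)
  have hpu : Γ.dist p u = t := congrArg Prod.snd h1
  have hvp : Γ.dist v p = t := congrArg Prod.snd h2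
  have hvu : t - 1 ≤ Γ.dist v u := by
    have := Γ.dist_triangle hsc p v u
    rw [hpu] at this
    have hd : Γ.dist p v = 1 := congrArg Prod.fst h2
    omega
  have huv_ne : u ≠ v := by
    rintro rfl
    rw [Γ.dist_self] at hvu
    omega
  have hnadj : ¬ Γ.underlying.Adj u v := by
    intro h
    exact htf h (adj_underlying Γ hup) ((adj_underlying Γ hpv).symm)
  have hd2 : Γ.underlying.dist u v = 2 :=
    sigma_dist_two Γ huv_ne hnadj (adj_underlying Γ hup) (adj_underlying Γ hpv)
  have hno2 : ∀ c, ¬ (Γ.Adj v c ∧ Γ.Adj c u) := by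
    rintro c ⟨hc1, hc2⟩
    have : Γ.dist v u ≤ 2 :=
      Γ.dist_le (Γ.hasPath_concat (Γ.hasPath_one hc1) (Γ.hasPath_one hc2))
    omega
  have hpcomm : p ∈ commSet Γ u v :=
    ⟨adj_underlying Γ hup, (adj_underlying Γ hpv).symm⟩
  -- main claim
  have hmain : ∀ c, c ∈ commSet Γ u v → Γ.tdist u c = (1, t) ∧ Γ.tdist c v = (1, t) := by
    intro c ⟨huc, hvc⟩
    by_cases hcp : c = p
    · subst hcp; exact ⟨h1, h2⟩
    -- commSet Γ u v = {p, c}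
    obtain ⟨a, b, hab, hset⟩ := commSet_pair Γ 2 hc2 hd2
    have hpc_set : commSet Γ u v = {p, c} := by
      have hp' : p ∈ ({a, b} : Set V) := hset ▸ hpcomm
      have hc' : c ∈ ({a, b} : Set V) := hset ▸ (⟨huc, hvc⟩ : c ∈ commSet Γ u v)
      rw [hset]
      rcases hp' with rfl | rfl <;> rcases hc' with h | h
      · exact absurd h hcp
      · rw [h]
      · rw [h]
        ext z
        simp only [Set.mem_insert_iff, Set.mem_singleton_iff]
        tauto
      · exact absurd h hcp
    -- swap the witness c
    have hcin : c ∈ Γ.P (Γ.tdist u c) (Γ.tdist c v) u v := ⟨rfl, rfl⟩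
    obtain ⟨r, hr1, hr2⟩ := Γ.P_swap_nonempty hwdr hcomm ⟨c, hcin⟩
    -- r is a common neighbour
    have e1 : Γ.dist u r = Γ.dist c v := congrArg Prod.fst hr1
    have e2 : Γ.dist r u = Γ.dist v c := congrArg Prod.snd hr1
    have f1 : Γ.dist r v = Γ.dist u c := congrArg Prod.fst hr2
    have f2 : Γ.dist v r = Γ.dist c u := congrArg Prod.snd hr2
    have hrcomm : r ∈ commSet Γ u v := by
      constructor
      · rcases hvc with h | h
        · exact Or.inr (Γ.dist_eq_one_iff.mp (e2.trans (Γ.adj_iff_dist_one.mp h)))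
        · exact Or.inl (Γ.dist_eq_one_iff.mp (e1.trans (Γ.adj_iff_dist_one.mp h)))
      · rcases huc with h | h
        · exact Or.inr (Γ.dist_eq_one_iff.mp (f1.trans (Γ.adj_iff_dist_one.mp h)))
        · exact Or.inl (Γ.dist_eq_one_iff.mp (f2.trans (Γ.adj_iff_dist_one.mp h)))
    rw [hpc_set] at hrcomm
    rcases hrcomm with hre | hre
    · -- r = p : then tdist u p = tdist c v and tdist p v = tdist u c
      rw [hre] at hr1 hr2
      rw [h1] at hr1
      rw [h2] at hr2
      exact ⟨hr2.symm, hr1.symm⟩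
    · -- r = c : κ-analysis
      rw [hre] at hr1
      have hκ : Γ.tdist u c = Γ.tdist c v := hr1
      -- c ~ u so tdist u c has a 1
      have huc1 : (Γ.tdist u c).1 = 1 ∨ (Γ.tdist u c).2 = 1 := by
        rcases huc with h | h
        · exact Or.inl (Γ.adj_iff_dist_one.mp h)
        · exact Or.inr (Γ.adj_iff_dist_one.mp h)
      rcases huc1 with hfst | hsnd
      swap
      · -- (tdist u c).2 = 1 : Adj c u and Adj v c, contradiction with hno2
        exfalso
        have hcu : Γ.Adj c u := Γ.dist_eq_one_iff.mp hsnd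
        have hvc' : Γ.Adj v c := by
          apply Γ.dist_eq_one_iff.mp
          have : (Γ.tdist c v).2 = 1 := by rw [← hκ]; exact hsnd
          exact this
        exact hno2 c ⟨hvc', hcu⟩
      · -- κ = (1, a)
        set a := (Γ.tdist u c).2 with ha
        have huc_adj : Γ.Adj u c := Γ.dist_eq_one_iff.mp hfst
        have hcv_adj : Γ.Adj c v := by
          apply Γ.dist_eq_one_iff.mp
          have : (Γ.tdist c v).1 = 1 := by rw [← hκ]; exact hfst
          exact this
        have hκuc : Γ.tdist u c = (1, a) := by
          rw [ha]; exact Prod.ext hfst rfl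
        have hκcv : Γ.tdist c v = (1, a) := by rw [← hκ, hκuc]
        by_cases hat : a = t
        · rw [hat] at hκuc hκcv
          exact ⟨hκuc, hκcv⟩
        · -- kill a ≠ t via the pair (p, c)
          exfalso
          have hppc : p ≠ c := fun h => hcp h.symm
          have hnadj_pc : ¬ Γ.underlying.Adj p c := by
            intro h
            exact htf (adj_underlying Γ hup) (Or.inl huc_adj) h
          have hd2pc : Γ.underlying.dist p c = 2 :=
            sigma_dist_two Γ hppc hnadj_pc (Or.inl hup).symm (Or.inl huc_adj)
          obtain ⟨a', b', hab', hset'⟩ := commSet_pair Γ 2 hc2 hd2pc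
          have hu_in : u ∈ commSet Γ p c := ⟨(Or.inl hup).symm, (Or.inl huc_adj).symm⟩
          have hv_in : v ∈ commSet Γ p c := ⟨Or.inl hpv, Or.inl hcv_adj⟩
          -- witness u : tdist p u = (t,1), tdist u c = (1,a)
          have hw1 : Γ.tdist p u = (t, 1) := by
            rw [Γ.tdist_swap u p, h1]
          have hwit : u ∈ Γ.P (t, 1) (1, a) p c := ⟨hw1, hκuc⟩
          obtain ⟨r', hr1', hr2'⟩ := Γ.P_swap_nonempty hwdr hcomm ⟨u, hwit⟩
          -- r' ∈ commSet p c
          have hr'comm : r' ∈ commSet Γ p c := by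
            constructor
            · have : Γ.dist p r' = 1 := congrArg Prod.fst hr1'
              exact Or.inl (Γ.dist_eq_one_iff.mp this)
            · have hcr : Γ.dist c r' = 1 := congrArg Prod.snd hr2'
              exact Or.inl (Γ.dist_eq_one_iff.mp hcr)
          have hPCuv : commSet Γ p c = {u, v} := by
            have hu' : u ∈ ({a', b'} : Set V) := hset' ▸ hu_in
            have hv' : v ∈ ({a', b'} : Set V) := hset' ▸ hv_in
            rw [hset']
            rcases hu' with rfl | rfl <;> rcases hv' with h | h
            · exact absurd h.symm huv_ne
            · rw [h]
            · rw [h]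
              ext z
              simp only [Set.mem_insert_iff, Set.mem_singleton_iff]
              tauto
            · exact absurd h.symm huv_ne

          rw [hPCuv] at hr'comm
          rcases hr'comm with hre' | hre'
          · -- r' = u : tdist p u = (1,a) but = (t,1)
            rw [hre', hw1] at hr1'
            have : t = 1 := congrArg Prod.fst hr1'
            omega
          · -- r' = v : tdist p v = (1,a) but = (1,t)
            rw [hre', h2] at hr1'
            have hta : t = a := congrArg Prod.snd hr1'
            exact hat hta.symm
  constructor
  · apply Set.eq_of_subset_of_ncard_le
    · intro c hc
      exact hmain c hc
    · -- midset.ncard ≤ commSet.ncard : since midset ⊆ commSet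
      apply Set.ncard_le_ncard
      · rintro c ⟨hc1, hc2⟩
        constructor
        · exact Or.inl (Γ.dist_eq_one_iff.mp (congrArg Prod.fst hc1))
        · exact Or.inr (Γ.dist_eq_one_iff.mp (congrArg Prod.fst hc2))
      · exact Set.toFinite _
    · exact Set.toFinite _
  · exact hd2

end Q2Step1

end Paper

namespace Paper

section Q2T4

open Finset
open scoped Classical

variable {V : Type*} [Finite V] (Γ : Digraph V)

/-- the `(1,t)`-out-valency is constant -/
lemma k_const (hwdr : Γ.IsWDR) (t : ℕ) (u u' : V) :
    Nat.card {c | Γ.tdist u c = (1, t)} = Nat.card {c | Γ.tdist u' c = (1, t)} := by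
  have key : ∀ w : V, Nat.card {c | Γ.tdist w c = (1, t)} = Γ.p (0, 0) (1, t) (t, 1) := by
    intro w
    have hset : {c | Γ.tdist w c = (1, t)} = Γ.P (1, t) (t, 1) w w := by
      ext c
      simp only [Set.mem_setOf_eq, Digraph.P]
      constructor
      · intro h
        exact ⟨h, by rw [Γ.tdist_swap, h]⟩
      · rintro ⟨h, -⟩; exact h
    rw [hset]
    have := hwdr.2 (1, t) (t, 1) w w
    rwa [Γ.tdist_self] at this
  rw [key u, key u']

/-- The `t ≥ 4` exclusion. -/
lemma t4_false (hwdr : Γ.IsWDR) (hcomm : Γ.IsCommutative)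
    (htf : ∀ {a b c : V}, Γ.underlying.Adj a b → Γ.underlying.Adj a c →
      Γ.underlying.Adj b c → False)
    (hc2 : ∀ x y, Γ.underlying.dist x y = 2 → cNum Γ.underlying 2 x y = 2)
    (t : ℕ) (ht4 : 4 ≤ t) {x y : V} (hxy : Γ.tdist x y = (1, t)) : False := by
  have : Fintype V := Fintype.ofFinite _
  set A : V → Finset V := fun u => univ.filter (fun c => Γ.tdist u c = (1, t)) with hA
  set k : ℕ := (A x).card with hk
  have hAcard : ∀ u, (A u).card = k := by
    intro u
    have h1 : (A u).card = Nat.card {c | Γ.tdist u c = (1, t)} := by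
      rw [natCard_setOf_eq]
    have h2 : (A x).card = Nat.card {c | Γ.tdist x c = (1, t)} := by
      rw [natCard_setOf_eq]
    rw [hk, h1, h2, k_const Γ hwdr t u x]
  have hk1 : 1 ≤ k := by
    have : y ∈ A x := by
      rw [hA]
      simp only [mem_filter, mem_univ, true_and]
      exact hxy
    calc 1 ≤ (A x).card := Finset.card_pos.mpr ⟨y, this⟩
    _ = k := rfl
  -- the 2-path pair set
  set T : Finset (V × V) :=
    univ.filter (fun pc => Γ.tdist x pc.1 = (1, t) ∧ Γ.tdist pc.1 pc.2 = (1, t)) with hT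
  have hTmem : ∀ pc : V × V, pc ∈ T ↔ (Γ.tdist x pc.1 = (1, t) ∧ Γ.tdist pc.1 pc.2 = (1, t)) := by
    intro pc
    rw [hT, mem_filter]
    simp only [mem_univ, true_and]
  have hAmem : ∀ u c : V, c ∈ A u ↔ Γ.tdist u c = (1, t) := by
    intro u c
    rw [hA]
    simp only [mem_filter, mem_univ, true_and]
  -- T.card = k * k
  have hT1 : T.card = k * k := by
    have hmem : ∀ pc ∈ T, pc.1 ∈ A x := by
      rintro pc hpc
      rw [hTmem] at hpc
      rw [hAmem]
      exact hpc.1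
    rw [card_eq_sum_card_fiberwise hmem]
    have hfib : ∀ p ∈ A x, (T.filter (fun pc => pc.1 = p)).card = k := by
      intro p hp
      rw [hAmem] at hp
      rw [← hAcard p]
      apply Finset.card_bij (fun pc _ => pc.2)
      · rintro pc hpc
        rw [mem_filter, hTmem] at hpc
        rw [hAmem, ← hpc.2]
        exact hpc.1.2
      · rintro pc hpc pc' hpc' hsnd
        rw [mem_filter] at hpc hpc'
        exact Prod.ext (hpc.2.trans hpc'.2.symm) hsnd
      · intro c hc
        rw [hAmem] at hc
        refine ⟨(p, c), ?_, rfl⟩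
        rw [mem_filter, hTmem]
        exact ⟨⟨hp, hc⟩, rfl⟩
    rw [Finset.sum_congr rfl hfib, Finset.sum_const, hAcard x, smul_eq_mul]
  -- the target set
  set W : Finset V := T.image Prod.snd with hW
  set M : V → Finset V :=
    fun v => univ.filter (fun c => Γ.tdist x c = (1, t) ∧ Γ.tdist c v = (1, t)) with hM
  have hMmem : ∀ v c : V, c ∈ M v ↔ (Γ.tdist x c = (1, t) ∧ Γ.tdist c v = (1, t)) := by
    intro v c
    rw [hM]
    simp only [mem_filter, mem_univ, true_and]
  -- each target has exactly 2 midpoints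
  have hMv : ∀ v ∈ W, (M v).card = 2 := by
    intro v hv
    rw [hW, mem_image] at hv
    obtain ⟨pc, hpc, hpcv⟩ := hv
    rw [hTmem] at hpc
    have hstep := step1 Γ hwdr hcomm htf hc2 t ht4 hpc.1 (hpcv ▸ hpc.2)
    have h2 : (commSet Γ x v).ncard = 2 := by
      have := hc2 x v hstep.2
      rw [cNum, show (2:ℕ) - 1 = 1 from rfl, commSet_eq_aNum_set, Nat.card_coe_set_eq] at this
      exact this
    rw [hstep.1] at h2
    rw [← Nat.card_coe_set_eq, natCard_setOf_eq] at h2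
    rw [← h2]
  -- T.card = 2 * W.card
  have hT2 : T.card = 2 * W.card := by
    have hmem : ∀ pc ∈ T, pc.2 ∈ W := fun pc hpc => mem_image_of_mem _ hpc
    rw [card_eq_sum_card_fiberwise hmem]
    have hfib : ∀ v ∈ W, (T.filter (fun pc => pc.2 = v)).card = 2 := by
      intro v hv
      rw [← hMv v hv]
      apply Finset.card_bij (fun pc _ => pc.1)
      · rintro pc hpc
        rw [mem_filter, hTmem] at hpc
        rw [hMmem]
        exact ⟨hpc.1.1, hpc.2 ▸ hpc.1.2⟩
      · rintro pc hpc pc' hpc' hfst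
        rw [mem_filter] at hpc hpc'
        exact Prod.ext hfst (hpc.2.trans hpc'.2.symm)
      · intro c hc
        rw [hMmem] at hc
        refine ⟨(c, v), ?_, rfl⟩
        rw [mem_filter, hTmem]
        exact ⟨⟨hc.1, hc.2⟩, rfl⟩
    rw [Finset.sum_congr rfl hfib, Finset.sum_const, smul_eq_mul, Nat.mul_comm]
  -- injectivity of v ↦ midpoint set
  have hinj : ∀ v ∈ W, ∀ v' ∈ W, M v = M v' → v = v' := by
    intro v hv v' hv' heq
    have h2 := hMv v hv
    obtain ⟨p, p', hpp', hset⟩ := Finset.card_eq_two.mp h2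
    have hpmem : p ∈ M v := by rw [hset]; simp
    have hp'mem : p' ∈ M v := by rw [hset]; simp
    have hpmem2 : p ∈ M v' := heq ▸ hpmem
    have hp'mem2 : p' ∈ M v' := heq ▸ hp'mem
    rw [hMmem] at hpmem hp'mem hpmem2 hp'mem2
    have hxp : Γ.Adj x p := Γ.dist_eq_one_iff.mp (congrArg Prod.fst hpmem.1)
    have hxp' : Γ.Adj x p' := Γ.dist_eq_one_iff.mp (congrArg Prod.fst hp'mem.1)
    have hnadj : ¬ Γ.underlying.Adj p p' := fun h =>
      htf (Or.inl hxp) (Or.inl hxp') h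
    have hd2 : Γ.underlying.dist p p' = 2 :=
      sigma_dist_two Γ hpp' hnadj (Or.inl hxp).symm (Or.inl hxp')
    obtain ⟨a, b, hab, hset2⟩ := commSet_pair Γ 2 hc2 hd2
    have hx_in : x ∈ commSet Γ p p' := ⟨(Or.inl hxp).symm, (Or.inl hxp').symm⟩
    have hv_in : v ∈ commSet Γ p p' :=
      ⟨Or.inl (Γ.dist_eq_one_iff.mp (congrArg Prod.fst hpmem.2)),
       Or.inl (Γ.dist_eq_one_iff.mp (congrArg Prod.fst hp'mem.2))⟩
    have hv'_in : v' ∈ commSet Γ p p' :=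
      ⟨Or.inl (Γ.dist_eq_one_iff.mp (congrArg Prod.fst hpmem2.2)),
       Or.inl (Γ.dist_eq_one_iff.mp (congrArg Prod.fst hp'mem2.2))⟩
    have hvx : v ≠ x := by
      intro h
      have h1 : Γ.dist p v = 1 := congrArg Prod.fst hpmem.2
      have h2' : Γ.dist p x = t := congrArg Prod.snd hpmem.1
      rw [h] at h1
      omega
    have hv'x : v' ≠ x := by
      intro h
      have h1 : Γ.dist p v' = 1 := congrArg Prod.fst hpmem2.2
      have h2' : Γ.dist p x = t := congrArg Prod.snd hpmem.1
      rw [h] at h1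
      omega
    rw [hset2] at hx_in hv_in hv'_in
    rcases hx_in with hxa | hxa <;> rcases hv_in with hva | hva <;>
      rcases hv'_in with hv'a | hv'a
    · exact absurd (hva.trans hxa.symm) hvx
    · exact absurd (hva.trans hxa.symm) hvx
    · exact absurd (hv'a.trans hxa.symm) hv'x
    · exact hva.trans hv'a.symm
    · exact hva.trans hv'a.symm
    · exact absurd (hv'a.trans hxa.symm) hv'x
    · exact absurd (hva.trans hxa.symm) hvx
    · exact absurd (hva.trans hxa.symm) hvx
  -- W.card ≤ choose k 2
  have hWle : W.card ≤ k.choose 2 := by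
    have hmap : ∀ v ∈ W, M v ∈ (A x).powersetCard 2 := by
      intro v hv
      rw [Finset.mem_powersetCard]
      constructor
      · intro c hc
        rw [hMmem] at hc
        rw [hAmem]
        exact hc.1
      · exact hMv v hv
    calc W.card ≤ ((A x).powersetCard 2).card :=
          Finset.card_le_card_of_injOn M hmap (fun v hv v' hv' h => hinj v hv v' hv' h)
      _ = k.choose 2 := by rw [Finset.card_powersetCard, hAcard x]
  -- wrap up
  have hchoose : 2 * k.choose 2 ≤ k * (k - 1) := by
    rw [Nat.choose_two_right, Nat.mul_comm]
    exact Nat.div_mul_le_self (k * (k-1)) 2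
  have hfinal : k * k ≤ k * (k - 1) := by
    calc k * k = T.card := hT1.symm
      _ = 2 * W.card := hT2
      _ ≤ 2 * k.choose 2 := Nat.mul_le_mul_left 2 hWle
      _ ≤ k * (k - 1) := hchoose
  have hkk : k ≤ k - 1 := Nat.le_of_mul_le_mul_left hfinal (by omega)
  omega

end Q2T4

end Paper

namespace Paper

section Q2T3

variable {V : Type*} [Finite V] (Γ : Digraph V)

/-- The `t = 3` witness construction. -/
lemma t3_witness (hwdr : Γ.IsWDR) (hcomm : Γ.IsCommutative)
    (htf : ∀ {a b c : V}, Γ.underlying.Adj a b → Γ.underlying.Adj a c →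
      Γ.underlying.Adj b c → False)
    (hc2 : ∀ x y, Γ.underlying.dist x y = 2 → cNum Γ.underlying 2 x y = 2)
    {x y : V} (hadj : Γ.Adj x y) (hnadj : ¬ Γ.Adj y x) (ht : Γ.dist y x = 3) :
    ∃ z, Γ.tdist x z = (2, 2) ∧ Γ.tdist z y = (3, 1) := by
  have hsc := hwdr.1
  obtain ⟨z, hyz, hzx⟩ := Γ.exists_adj_dist hsc (by rw [ht] : Γ.dist y x = 2 + 1)
  have hzx_ne : z ≠ x := by
    rintro rfl
    rw [Γ.dist_self] at hzx
    omega
  have hnadj_xz : ¬ Γ.underlying.Adj x z := fun h =>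
    htf (Or.inl hadj) h (Or.inl hyz)
  have hxz : Γ.dist x z = 2 := by
    have hle : Γ.dist x z ≤ 2 :=
      Γ.dist_le (Γ.hasPath_concat (Γ.hasPath_one hadj) (Γ.hasPath_one hyz))
    have h0 : Γ.dist x z ≠ 0 := by
      intro h
      exact hzx_ne ((Γ.dist_eq_zero_iff (hsc x z)).mp h).symm
    have h1 : Γ.dist x z ≠ 1 := by
      intro h
      exact hnadj_xz (Or.inl (Γ.dist_eq_one_iff.mp h))
    omega
  have htd_xz : Γ.tdist x z = (2, 2) := Prod.ext hxz hzx
  have hsd2 : Γ.underlying.dist x z = 2 :=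
    sigma_dist_two Γ (fun h => hzx_ne h.symm) hnadj_xz (Or.inl hadj) (Or.inl hyz)
  obtain ⟨a, b, hab, hset⟩ := commSet_pair Γ 2 hc2 hsd2
  -- the second midpoint w
  obtain ⟨w, hzw, hwx1⟩ := Γ.exists_adj_dist hsc (by rw [hzx] : Γ.dist z x = 1 + 1)
  have hwx : Γ.Adj w x := Γ.dist_eq_one_iff.mp hwx1
  have hw_comm : w ∈ commSet Γ x z := ⟨Or.inr hwx, Or.inl hzw⟩
  have hy_comm : y ∈ commSet Γ x z := ⟨Or.inl hadj, Or.inr hyz⟩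
  have hwy : w ≠ y := by
    rintro rfl
    exact hnadj hwx
  have hcomm_xz : commSet Γ x z = {y, w} := by
    have hy' : y ∈ ({a, b} : Set V) := hset ▸ hy_comm
    have hw' : w ∈ ({a, b} : Set V) := hset ▸ hw_comm
    rw [hset]
    rcases hy' with rfl | rfl <;> rcases hw' with h | h
    · exact absurd h (fun hh => hwy hh)
    · rw [h]
    · rw [h]
      ext s
      simp only [Set.mem_insert_iff, Set.mem_singleton_iff]
      tauto
    · exact absurd h (fun hh => hwy hh)
  -- distance from z to y
  have hdzy_le : Γ.dist z y ≤ 3 := by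
    refine Γ.dist_le ?_
    have h1 := Γ.hasPath_concat (Γ.hasPath_one hzw)
      (Γ.hasPath_concat (Γ.hasPath_one hwx) (Γ.hasPath_one hadj))
    exact h1
  -- F2 swap to pin dist z y = 3
  have htd_xy : Γ.tdist x y = (1, 3) := Prod.ext (Γ.dist_eq_one_iff.mpr hadj) ht
  have hyP : y ∈ Γ.P (Γ.tdist x y) (Γ.tdist y z) x z := ⟨rfl, rfl⟩
  obtain ⟨v, hv1, hv2⟩ := Γ.P_swap_nonempty hwdr hcomm ⟨y, hyP⟩
  have hv_comm : v ∈ commSet Γ x z := by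
    constructor
    · have h1 : Γ.dist x v = Γ.dist y z := congrArg Prod.fst hv1
      rw [Γ.dist_eq_one_iff.mpr hyz] at h1
      exact Or.inl (Γ.dist_eq_one_iff.mp h1)
    · have h1 : Γ.dist v z = Γ.dist x y := congrArg Prod.fst hv2
      rw [Γ.dist_eq_one_iff.mpr hadj] at h1
      exact Or.inr (Γ.dist_eq_one_iff.mp h1)
  rw [hcomm_xz] at hv_comm
  have hdzy : Γ.dist z y = 3 := by
    rcases hv_comm with hve | hve
    · -- v = y : tdist x y = tdist y z gives dist z y = 3
      rw [hve] at hv1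
      rw [htd_xy] at hv1
      exact (congrArg Prod.snd hv1).symm
    · -- v = w : tdist w z = tdist x y = (1,3), but Adj z w
      exfalso
      rw [hve] at hv2
      rw [htd_xy] at hv2
      have h3 : Γ.dist z w = 3 := congrArg Prod.snd hv2
      have h1 : Γ.dist z w = 1 := Γ.dist_eq_one_iff.mpr hzw
      omega
  exact ⟨z, htd_xz, Prod.ext hdzy (Γ.dist_eq_one_iff.mpr hyz)⟩

end Q2T3

end Paper

open Paper in
/-- **Lemma 3.11.** If `x,y ∈ V(Γᵢ(α))` and `d⁺_{Γᵢ(α)}(x) > d⁺_{Γᵢ(α)}(y)`,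
then `(x,y) ∈ Γ_{1,3}` and `p^{(1,3)}_{(2,2),(3,1)} ≠ 0`. -/
theorem lemma_p_eq_four {S : Type*} [Finite S] {n : ℕ}
    (Γ : Paper.Digraph (Fin (n + 1) → S)) (q : ℕ) (hq : q = Nat.card S)
    (hwdr : Γ.IsWDR) (hcomm : Γ.IsCommutative)
    (hdrg : IsDRG Γ.underlying)
    (ha1 : ∀ x y, Γ.underlying.dist x y = 1 → aNum Γ.underlying 1 x y = q - 2)
    (hc2 : ∀ x y, Γ.underlying.dist x y = 2 → cNum Γ.underlying 2 x y = 2)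
    (o : S) (m : ℕ) (hm1 : 1 ≤ m) (hmd : m ≤ n + 1)
    (hham : (Γ.trunc o m).underlying = hammingGraph (Fin m) S)
    (i : Fin (n + 1)) (hi : i.1 < m)
    (α : Fin n → S) (hα : α ∈ Tset S o m)
    (x y : Fin (n + 1) → S) (hx : x ∈ lineSet i α) (hy : y ∈ lineSet i α)
    (hdeg : (Γ.line i α).outDeg ⟨y, hy⟩ < (Γ.line i α).outDeg ⟨x, hx⟩) :
    Γ.tdist x y = (1, 3) ∧ Γ.p (1, 3) (2, 2) (3, 1) ≠ 0 := by
  classical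
  have hsc := hwdr.1
  -- rewrite hdeg as set counts
  rw [outDeg_line_eq Γ i α x hx, outDeg_line_eq Γ i α y hy] at hdeg
  -- x ≠ y
  have hxy : x ≠ y := by
    rintro rfl
    exact Nat.lt_irrefl _ hdeg
  -- q ≥ 2
  have hq2' : 2 ≤ q := by
    obtain ⟨bx, hbx⟩ := hx
    obtain ⟨by', hby⟩ := hy
    have hb : bx ≠ by' := by
      rintro rfl
      exact hxy (hbx.symm.trans hby)
    have : Nontrivial S := ⟨bx, by', hb⟩
    rw [hq]
    exact Finite.one_lt_card_iff_nontrivial.mpr this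
  rcases Nat.lt_or_ge q 3 with hq3 | hq3
  · -- q = 2 branch
    have hq2 : q = 2 := by omega
    have htf : ∀ {a b c : Fin (n+1) → S}, Γ.underlying.Adj a b → Γ.underlying.Adj a c →
        Γ.underlying.Adj b c → False := fun hab hac hbc => tri_free Γ q hq2 ha1 hab hac hbc
    -- lineSet = {x, y}
    have hL : (lineSet i α).ncard = 2 := by
      rw [← Nat.card_coe_set_eq, line_natCard, ← hq, hq2]
    have hLxy : lineSet i α = {x, y} := by
      refine (Set.eq_of_subset_of_ncard_le ?_ ?_ (Set.toFinite _)).symm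
      · rintro z (rfl | rfl)
        exacts [hx, hy]
      · rw [hL, Set.ncard_pair hxy]
    -- Adj x y and ¬ Adj y x
    have hsubx : {c | c ∈ lineSet i α ∧ Γ.Adj x c} ⊆ {y} := by
      rintro c ⟨hcL, hadj⟩
      rw [hLxy] at hcL
      rcases hcL with rfl | rfl
      · exact absurd hadj (Γ.loopless c)
      · rfl
    have hsuby : {c | c ∈ lineSet i α ∧ Γ.Adj y c} ⊆ {x} := by
      rintro c ⟨hcL, hadj⟩
      rw [hLxy] at hcL
      rcases hcL with rfl | rfl
      · rfl
      · exact absurd hadj (Γ.loopless c)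
    have hAxy : Γ.Adj x y := by
      by_contra hA
      have hempty : {c | c ∈ lineSet i α ∧ Γ.Adj x c} = ∅ := by
        apply Set.eq_empty_iff_forall_notMem.mpr
        rintro c ⟨hcL, hadj⟩
        have := hsubx ⟨hcL, hadj⟩
        rw [Set.mem_singleton_iff] at this
        subst this
        exact hA hadj
      rw [hempty] at hdeg
      simp at hdeg
    have hnAyx : ¬ Γ.Adj y x := by
      intro hA
      have h1 : 1 ≤ Nat.card {c | c ∈ lineSet i α ∧ Γ.Adj y c} := by
        have hne : Nonempty {c | c ∈ lineSet i α ∧ Γ.Adj y c} := ⟨⟨x, hx, hA⟩⟩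
        exact Nat.card_pos
      have h2 : Nat.card {c | c ∈ lineSet i α ∧ Γ.Adj x c} ≤ 1 := by
        rw [Nat.card_coe_set_eq]
        calc ({c | c ∈ lineSet i α ∧ Γ.Adj x c}).ncard ≤ ({y} : Set _).ncard :=
              Set.ncard_le_ncard hsubx (Set.toFinite _)
          _ = 1 := Set.ncard_singleton y
      omega
    -- t := dist y x
    set t : ℕ := Γ.dist y x with htdef
    have ht0 : t ≠ 0 := by
      intro h
      exact hxy ((Γ.dist_eq_zero_iff (hsc y x)).mp h).symm
    have ht1 : t ≠ 1 := by
      intro h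
      exact hnAyx (Γ.dist_eq_one_iff.mp h)
    have ht2 : t ≠ 2 := no_two_path Γ htf hsc (Or.inr hAxy)
    have ht4 : ¬ (4 ≤ t) := by
      intro h4
      exact t4_false Γ hwdr hcomm htf hc2 t h4
        (Prod.ext (Γ.dist_eq_one_iff.mpr hAxy) rfl)
    have ht3 : t = 3 := by omega
    have htd_xy : Γ.tdist x y = (1, 3) :=
      Prod.ext (Γ.dist_eq_one_iff.mpr hAxy) ht3
    refine ⟨htd_xy, ?_⟩
    obtain ⟨z, hz1, hz2⟩ := t3_witness Γ hwdr hcomm htf hc2 hAxy hnAyx ht3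
    have hcard := hwdr.2 (2, 2) (3, 1) x y
    rw [htd_xy] at hcard
    rw [← hcard]
    have hne : Nonempty (Γ.P (2, 2) (3, 1) x y) := ⟨⟨z, hz1, hz2⟩⟩
    have := @Nat.card_pos _ hne _
    omega
  · -- q ≥ 3 : contradiction
    exact absurd hdeg (fun h =>
      q3_false Γ o m i α hwdr hcomm q hq ha1 hmd hi hham hα hx hy hq3 h)
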